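/- For every chamber 𝒞 of the affine Weyl group arrangement of type Ã₂, there is exactly one root α ∈ Φ such that v + α ∈ 𝒞 for all v ∈ 𝒞 (the root pointing into 𝒞). -/

import Mathlib

noncomputable section

open scoped RealInnerProductSpace

/-- The plane `V = ℝ²`. -/
abbrev V : Type := EuclideanSpace ℝ (Fin 2)

/-- The affine reflection in the hyperplane `H_{α,k}`. -/
def sRefl (α : V) (k : ℤ) (v : V) : V := v - (⟪α, v⟫ - (k : ℝ)) • α

/-- The positive roots `α₁, α₂, α̃ = α₁ + α₂` of the `A₂` root system. -/
def PosRoots (a1 a2 : V) : Set V := {a1, a2, a1 + a2}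

/-- The root system `Φ` of type `A₂`. -/
def Phi (a1 a2 : V) : Set V := {α | α ∈ PosRoots a1 a2 ∨ -α ∈ PosRoots a1 a2}

/-- A permutation of `V` acting as the affine reflection `s_{α,k}` for some `α ∈ Φ`, `k ∈ ℤ`. -/
def IsAffRefl (a1 a2 : V) (g : Equiv.Perm V) : Prop :=
  ∃ α ∈ Phi a1 a2, ∃ k : ℤ, ∀ v : V, g v = sRefl α k v

/-- The affine Weyl group of type `Ã₂`: the group of (affine) transformations of `V`
generated by all the affine reflections `s_{α,k}`, `α ∈ Φ`, `k ∈ ℤ`. -/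
def AffWeyl (a1 a2 : V) : Subgroup (Equiv.Perm V) :=
  Subgroup.closure {g | IsAffRefl a1 a2 g}

/-- The action of an element of the affine Weyl group on the plane `V`. -/
def act {a1 a2 : V} (w : AffWeyl a1 a2) (v : V) : V := (w : Equiv.Perm V) v

/-- `g` is one of the simple reflections `s₁ = s_{α₁,0}`, `s₂ = s_{α₂,0}`, `s₀ = s_{α̃,1}`. -/
def IsSimpleRefl (a1 a2 : V) (g : Equiv.Perm V) : Prop :=
  (∀ v : V, g v = sRefl a1 0 v) ∨ (∀ v : V, g v = sRefl a2 0 v) ∨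
    (∀ v : V, g v = sRefl (a1 + a2) 1 v)

/-- The length function of the affine Weyl group `W` of type `Ã₂`, with respect to the
simple reflections. -/
def len (a1 a2 : V) (w : AffWeyl a1 a2) : ℕ :=
  sInf {n | ∃ l : List (AffWeyl a1 a2),
    (∀ g ∈ l, IsSimpleRefl a1 a2 (g : Equiv.Perm V)) ∧ l.length = n ∧ l.prod = w}

/-- The reflections of `W` are the `s_{α,k}`, `α ∈ Φ`, `k ∈ ℤ`. -/
def IsReflW (a1 a2 : V) (g : Equiv.Perm V) : Prop := IsAffRefl a1 a2 g

/-- The Bruhat order on `W`: the partial order generated by `u < r * u` whenever `r` is a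
reflection and `ℓ(u) < ℓ(r * u)`. -/
def BruhatLE (a1 a2 : V) (x w : AffWeyl a1 a2) : Prop :=
  Relation.ReflTransGen
    (fun a b => ∃ r : AffWeyl a1 a2, IsReflW a1 a2 (r : Equiv.Perm V) ∧ b = r * a ∧
      len a1 a2 a < len a1 a2 b) x w

/-- The strict Bruhat order. -/
def BruhatLT (a1 a2 : V) (x w : AffWeyl a1 a2) : Prop := BruhatLE a1 a2 x w ∧ x ≠ w

/-- The fundamental alcove `A₀`. -/
def A0 (a1 a2 : V) : Set V :=
  {v | 0 < ⟪a1, v⟫ ∧ 0 < ⟪a2, v⟫ ∧ ⟪a1 + a2, v⟫ < 1}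

/-- The fundamental `α`-root strip. -/
def Strip (α : V) : Set V := {v | 0 ≤ ⟪α, v⟫ ∧ ⟪α, v⟫ ≤ 1}

/-- The union of the three fundamental root strips. -/
def StripUnion (a1 a2 : V) : Set V := Strip a1 ∪ Strip a2 ∪ Strip (a1 + a2)

/-- `w` is spiral if the alcove center `w q` lies in a fundamental root strip. -/
def IsSpiral (a1 a2 q : V) (w : AffWeyl a1 a2) : Prop :=
  (w : Equiv.Perm V) q ∈ StripUnion a1 a2

/-- The chambers: connected components of the complement of the union of the fundamental
root strips. -/
def IsChamber (a1 a2 : V) (C : Set V) : Prop :=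
  ∃ v ∈ (StripUnion a1 a2)ᶜ, C = connectedComponentIn (StripUnion a1 a2)ᶜ v

/-- The chamber containing the alcove center `w q` (for non-spiral `w`). -/
def chamberOf (a1 a2 q : V) (w : AffWeyl a1 a2) : Set V :=
  connectedComponentIn (StripUnion a1 a2)ᶜ ((w : Equiv.Perm V) q)

/-- The root hyperplane (line) `H_{α,k}`. -/
def Hplane (α : V) (k : ℤ) : Set V := {v | ⟪α, v⟫ = (k : ℝ)}

/-- `H_{α,i}` (with `α` a positive root and `i ∈ {0,1}`) is a wall of the chamber `C`:
the boundary of `C` meets `H_{α,i}` in more than one point (a ray). -/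
def IsWall (a1 a2 : V) (C : Set V) (α : V) (i : ℤ) : Prop :=
  α ∈ PosRoots a1 a2 ∧ (i = 0 ∨ i = 1) ∧
    ∃ u ∈ frontier C ∩ Hplane α i, ∃ v ∈ frontier C ∩ Hplane α i, u ≠ v

/-- A chamber is even if both of its walls are among the fixed hyperplanes
`H_{α₁,0}, H_{α₂,0}, H_{α̃,1}` of the simple reflections. -/
def IsEvenChamber (a1 a2 : V) (C : Set V) : Prop :=
  IsChamber a1 a2 C ∧ ∀ α i, IsWall a1 a2 C α i →
    ((α = a1 ∧ i = 0) ∨ (α = a2 ∧ i = 0) ∨ (α = a1 + a2 ∧ i = 1))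

/-- `q^w_x = n^w_x - ℓ(w)`, where `n^w_x` is the number of reflections `r` with `r x ≤ w`. -/
def qInt (a1 a2 : V) (w x : AffWeyl a1 a2) : ℤ :=
  (Set.ncard {r : AffWeyl a1 a2 |
      IsReflW a1 a2 (r : Equiv.Perm V) ∧ BruhatLE a1 a2 (r * x) w} : ℤ)
    - (len a1 a2 w : ℤ)

/-- The root `α ∈ Φ` points into the chamber `C`. -/
def PointsInto (a1 a2 : V) (C : Set V) (α : V) : Prop :=
  α ∈ Phi a1 a2 ∧ ∀ v ∈ C, v + α ∈ C

/-- `L(w)`: the subgroup generated by the simple reflections `s` with `s w < w`. -/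
def Lsub (a1 a2 : V) (w : AffWeyl a1 a2) : Subgroup (AffWeyl a1 a2) :=
  Subgroup.closure {s | IsSimpleRefl a1 a2 (s : Equiv.Perm V) ∧ BruhatLT a1 a2 (s * w) w}

/-- `w` is twisted spiral if `w = z s` with `z` spiral of even length, `s` simple, and
`ℓ(w) = ℓ(z) + 1`. -/
def IsTwistedSpiral (a1 a2 q : V) (w : AffWeyl a1 a2) : Prop :=
  ∃ z s : AffWeyl a1 a2, IsSpiral a1 a2 q z ∧ Even (len a1 a2 z) ∧
    IsSimpleRefl a1 a2 (s : Equiv.Perm V) ∧ w = z * s ∧ len a1 a2 w = len a1 a2 z + 1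

def sg (b : Bool) (t : ℝ) : Prop := cond b (1 < t) (t < 0)

def Reg (a1 a2 : V) (b : Bool × Bool × Bool) : Set V :=
  {v | sg b.1 ⟪a1, v⟫ ∧ sg b.2.1 ⟪a2, v⟫ ∧ sg b.2.2 ⟪a1 + a2, v⟫}

lemma contIP (a : V) : Continuous fun v : V => ⟪a, v⟫ :=
  continuous_const.inner continuous_id

lemma isOpen_sg (a : V) (c : Bool) : IsOpen {v : V | sg c ⟪a, v⟫} := by
  cases c
  · exact isOpen_lt (contIP a) continuous_const
  · exact isOpen_lt continuous_const (contIP a)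

lemma isOpen_reg (a1 a2 : V) (b : Bool × Bool × Bool) : IsOpen (Reg a1 a2 b) :=
  (isOpen_sg a1 b.1).inter ((isOpen_sg a2 b.2.1).inter (isOpen_sg (a1 + a2) b.2.2))

lemma lin_ip (a : V) : IsLinearMap ℝ (fun v : V => ⟪a, v⟫) :=
  ⟨fun x y => inner_add_right a x y, fun c x => by simp [real_inner_smul_right]⟩

lemma convex_sg (a : V) (c : Bool) : Convex ℝ {v : V | sg c ⟪a, v⟫} := by
  cases c
  · exact convex_halfSpace_lt (lin_ip a) 0
  · exact convex_halfSpace_gt (lin_ip a) 1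

lemma convex_reg (a1 a2 : V) (b : Bool × Bool × Bool) : Convex ℝ (Reg a1 a2 b) :=
  (convex_sg a1 b.1).inter ((convex_sg a2 b.2.1).inter (convex_sg (a1 + a2) b.2.2))

lemma compl_eq (a1 a2 : V) :
    (StripUnion a1 a2)ᶜ = ⋃ b : Bool × Bool × Bool, Reg a1 a2 b := by
  ext v
  simp only [StripUnion, Strip, Set.mem_compl_iff, Set.mem_union, Set.mem_setOf_eq,
    not_or, not_and_or, not_le, Set.mem_iUnion, Reg]
  constructor
  · rintro ⟨⟨h1 | h1, h2 | h2⟩, h3 | h3⟩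
    · exact ⟨(false, false, false), h1, h2, h3⟩
    · exact ⟨(false, false, true), h1, h2, h3⟩
    · exact ⟨(false, true, false), h1, h2, h3⟩
    · exact ⟨(false, true, true), h1, h2, h3⟩
    · exact ⟨(true, false, false), h1, h2, h3⟩
    · exact ⟨(true, false, true), h1, h2, h3⟩
    · exact ⟨(true, true, false), h1, h2, h3⟩
    · exact ⟨(true, true, true), h1, h2, h3⟩
  · rintro ⟨⟨b1, b2, b3⟩, h1, h2, h3⟩
    cases b1 <;> cases b2 <;> cases b3 <;>
      exact ⟨⟨by tauto, by tauto⟩, by tauto⟩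

lemma reg_eq_of_mem {a1 a2 : V} {b b' : Bool × Bool × Bool} {w : V}
    (h : w ∈ Reg a1 a2 b) (h' : w ∈ Reg a1 a2 b') : b = b' := by
  have key : ∀ (c c' : Bool) (t : ℝ), sg c t → sg c' t → c = c' := by
    intro c c' t hc hc'
    cases c <;> cases c' <;>
      simp only [sg, Bool.cond_true, Bool.cond_false] at hc hc' <;>
      first | rfl | linarith
  obtain ⟨h1, h2, h3⟩ := h
  obtain ⟨g1, g2, g3⟩ := h'
  exact Prod.ext (key _ _ _ h1 g1) (Prod.ext (key _ _ _ h2 g2) (key _ _ _ h3 g3))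

lemma comp_eq {a1 a2 : V} {b : Bool × Bool × Bool} {v : V} (hv : v ∈ Reg a1 a2 b) :
    connectedComponentIn (StripUnion a1 a2)ᶜ v = Reg a1 a2 b := by
  have hsub : Reg a1 a2 b ⊆ (StripUnion a1 a2)ᶜ := by
    rw [compl_eq]; exact Set.subset_iUnion _ b
  apply Set.Subset.antisymm
  · set T := ⋃ b' ∈ {x : Bool × Bool × Bool | x ≠ b}, Reg a1 a2 b' with hTdef
    have hT : IsOpen T := isOpen_biUnion fun b' _ => isOpen_reg a1 a2 b'
    have hdisj : Disjoint (Reg a1 a2 b) T := by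
      rw [Set.disjoint_left]
      rintro w hw hwT
      simp only [hTdef, Set.mem_iUnion, Set.mem_setOf_eq] at hwT
      obtain ⟨b', hne, hw'⟩ := hwT
      exact hne (reg_eq_of_mem hw' hw)
    have hcover : (StripUnion a1 a2)ᶜ ⊆ Reg a1 a2 b ∪ T := by
      rw [compl_eq]
      intro w hw
      obtain ⟨b', hb'⟩ := Set.mem_iUnion.mp hw
      by_cases hbb : b' = b
      · exact Or.inl (hbb ▸ hb')
      · exact Or.inr (by simp only [hTdef, Set.mem_iUnion, Set.mem_setOf_eq]; exact ⟨b', hbb, hb'⟩)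
    exact (isPreconnected_connectedComponentIn).subset_left_of_subset_union
      (isOpen_reg a1 a2 b) hT hdisj
      ((connectedComponentIn_subset _ _).trans hcover)
      ⟨v, mem_connectedComponentIn (hsub hv), hv⟩
  · exact (convex_reg a1 a2 b).isPreconnected.subset_connectedComponentIn hv hsub

lemma iterTrans {C : Set V} {β : V} (h : ∀ w ∈ C, w + β ∈ C) {v : V} (hv : v ∈ C) :
    ∀ n : ℕ, v + (n : ℝ) • β ∈ C := by
  intro n
  induction n with
  | zero => simpa using hv
  | succ k ih =>
      have := h _ ih
      push_cast
      rw [add_smul, one_smul, ← add_assoc]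
      exact this

lemma arch_ge {x s : ℝ} (h : ∀ n : ℕ, 1 < x + n * s) : 0 ≤ s := by
  by_contra hs
  push_neg at hs
  obtain ⟨n, hn⟩ := exists_nat_gt ((x - 1) / (-s))
  rw [div_lt_iff₀ (by linarith : (0:ℝ) < -s)] at hn
  have := h n
  nlinarith

lemma arch_le {x s : ℝ} (h : ∀ n : ℕ, x + n * s < 0) : s ≤ 0 := by
  by_contra hs
  push_neg at hs
  obtain ⟨n, hn⟩ := exists_nat_gt ((-x) / s)
  rw [div_lt_iff₀ hs] at hn
  have := h n
  nlinarith

lemma constraint_ge {C : Set V} {β v a : V} (hinv : ∀ w ∈ C, w + β ∈ C) (hv : v ∈ C)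
    (hC : ∀ w ∈ C, 1 < ⟪a, w⟫) : 0 ≤ ⟪a, β⟫ := by
  refine arch_ge (x := ⟪a, v⟫) fun n => ?_
  have := hC _ (iterTrans hinv hv n)
  rwa [inner_add_right, real_inner_smul_right] at this

lemma constraint_le {C : Set V} {β v a : V} (hinv : ∀ w ∈ C, w + β ∈ C) (hv : v ∈ C)
    (hC : ∀ w ∈ C, ⟪a, w⟫ < 0) : ⟪a, β⟫ ≤ 0 := by
  refine arch_le (x := ⟪a, v⟫) fun n => ?_
  have := hC _ (iterTrans hinv hv n)
  rwa [inner_add_right, real_inner_smul_right] at this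
lemma mem_Phi_iff {a1 a2 β : V} :
    β ∈ Phi a1 a2 ↔
      β = a1 ∨ β = a2 ∨ β = a1 + a2 ∨ β = -a1 ∨ β = -a2 ∨ β = -(a1 + a2) := by
  simp only [Phi, PosRoots, Set.mem_setOf_eq, Set.mem_insert_iff, Set.mem_singleton_iff,
    neg_eq_iff_eq_neg]
  tauto

lemma phi_mem1 (a1 a2 : V) : a1 ∈ Phi a1 a2 := mem_Phi_iff.mpr (Or.inl rfl)
lemma phi_mem2 (a1 a2 : V) : a2 ∈ Phi a1 a2 := mem_Phi_iff.mpr (by tauto)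
lemma phi_mem3 (a1 a2 : V) : a1 + a2 ∈ Phi a1 a2 := mem_Phi_iff.mpr (by tauto)
lemma phi_mem4 (a1 a2 : V) : -a1 ∈ Phi a1 a2 := mem_Phi_iff.mpr (by tauto)
lemma phi_mem5 (a1 a2 : V) : -a2 ∈ Phi a1 a2 := mem_Phi_iff.mpr (by tauto)
lemma phi_mem6 (a1 a2 : V) : -(a1 + a2) ∈ Phi a1 a2 := mem_Phi_iff.mpr (by tauto)

/-- **Lemma.** For every chamber `𝒞` of the affine Weyl group arrangement of type `Ã₂`,
there is exactly one root `α ∈ Φ` such that `v + α ∈ 𝒞` for all `v ∈ 𝒞`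
(the root pointing into `𝒞`). -/
theorem exists_unique_root_pointing_into_chamber
    (a1 a2 : V)
    (hnorm1 : ⟪a1, a1⟫ = 2) (hnorm2 : ⟪a2, a2⟫ = 2) (hip : ⟪a1, a2⟫ = -1)
    (C : Set V) (hC : IsChamber a1 a2 C) :
    ∃! α : V, PointsInto a1 a2 C α := by
  have hip' : ⟪a2, a1⟫ = -1 := by rw [real_inner_comm]; exact hip
  obtain ⟨v, hv, rfl⟩ := hC
  rw [compl_eq] at hv
  obtain ⟨b, hb⟩ := Set.mem_iUnion.mp hv
  rw [comp_eq hb]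
  obtain ⟨b1, b2, b3⟩ := b
  cases b1 <;> cases b2 <;> cases b3
  -- (false, false, false) : α = -(a1+a2)
  · refine ⟨-(a1 + a2), ⟨⟨phi_mem6 a1 a2, ?_⟩, ?_⟩⟩
    · intro w hw
      simp only [Reg, Set.mem_setOf_eq, sg, Bool.cond_true, Bool.cond_false,
        inner_add_right, inner_add_left, inner_neg_right, hnorm1, hnorm2, hip, hip'] at hw ⊢
      obtain ⟨h1, h2, h3⟩ := hw
      refine ⟨by linarith, by linarith, by linarith⟩
    · rintro β ⟨hβPhi, hβinv⟩
      have c1 := constraint_le hβinv hb (fun w hw => hw.1)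
      have c2 := constraint_le hβinv hb (fun w hw => hw.2.1)
      have c3 := constraint_le hβinv hb (fun w hw => hw.2.2)
      rcases mem_Phi_iff.mp hβPhi with rfl | rfl | rfl | rfl | rfl | rfl
      · exfalso; simp only [inner_neg_right, inner_add_right, inner_add_left,
          hnorm1, hnorm2, hip, hip'] at c1 c2 c3; linarith
      · exfalso; simp only [inner_neg_right, inner_add_right, inner_add_left,
          hnorm1, hnorm2, hip, hip'] at c1 c2 c3; linarith
      · exfalso; simp only [inner_neg_right, inner_add_right, inner_add_left,
          hnorm1, hnorm2, hip, hip'] at c1 c2 c3; linarith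
      · exfalso; simp only [inner_neg_right, inner_add_right, inner_add_left,
          hnorm1, hnorm2, hip, hip'] at c1 c2 c3; linarith
      · exfalso; simp only [inner_neg_right, inner_add_right, inner_add_left,
          hnorm1, hnorm2, hip, hip'] at c1 c2 c3; linarith
      · rfl
  -- (false, false, true) : empty
  · exfalso
    simp only [Reg, Set.mem_setOf_eq, sg, Bool.cond_true, Bool.cond_false,
      inner_add_left] at hb
    obtain ⟨h1, h2, h3⟩ := hb
    linarith
  -- (false, true, false) : α = -a1
  · refine ⟨-a1, ⟨⟨phi_mem4 a1 a2, ?_⟩, ?_⟩⟩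
    · intro w hw
      simp only [Reg, Set.mem_setOf_eq, sg, Bool.cond_true, Bool.cond_false,
        inner_add_right, inner_add_left, inner_neg_right, hnorm1, hnorm2, hip, hip'] at hw ⊢
      obtain ⟨h1, h2, h3⟩ := hw
      refine ⟨by linarith, by linarith, by linarith⟩
    · rintro β ⟨hβPhi, hβinv⟩
      have c1 := constraint_le hβinv hb (fun w hw => hw.1)
      have c2 := constraint_ge hβinv hb (fun w hw => hw.2.1)
      have c3 := constraint_le hβinv hb (fun w hw => hw.2.2)
      rcases mem_Phi_iff.mp hβPhi with rfl | rfl | rfl | rfl | rfl | rfl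
      · exfalso; simp only [inner_neg_right, inner_add_right, inner_add_left,
          hnorm1, hnorm2, hip, hip'] at c1 c2 c3; linarith
      · exfalso; simp only [inner_neg_right, inner_add_right, inner_add_left,
          hnorm1, hnorm2, hip, hip'] at c1 c2 c3; linarith
      · exfalso; simp only [inner_neg_right, inner_add_right, inner_add_left,
          hnorm1, hnorm2, hip, hip'] at c1 c2 c3; linarith
      · rfl
      · exfalso; simp only [inner_neg_right, inner_add_right, inner_add_left,
          hnorm1, hnorm2, hip, hip'] at c1 c2 c3; linarith
      · exfalso; simp only [inner_neg_right, inner_add_right, inner_add_left,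
          hnorm1, hnorm2, hip, hip'] at c1 c2 c3; linarith
  -- (false, true, true) : α = a2
  · refine ⟨a2, ⟨⟨phi_mem2 a1 a2, ?_⟩, ?_⟩⟩
    · intro w hw
      simp only [Reg, Set.mem_setOf_eq, sg, Bool.cond_true, Bool.cond_false,
        inner_add_right, inner_add_left, inner_neg_right, hnorm1, hnorm2, hip, hip'] at hw ⊢
      obtain ⟨h1, h2, h3⟩ := hw
      refine ⟨by linarith, by linarith, by linarith⟩
    · rintro β ⟨hβPhi, hβinv⟩
      have c1 := constraint_le hβinv hb (fun w hw => hw.1)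
      have c2 := constraint_ge hβinv hb (fun w hw => hw.2.1)
      have c3 := constraint_ge hβinv hb (fun w hw => hw.2.2)
      rcases mem_Phi_iff.mp hβPhi with rfl | rfl | rfl | rfl | rfl | rfl
      · exfalso; simp only [inner_neg_right, inner_add_right, inner_add_left,
          hnorm1, hnorm2, hip, hip'] at c1 c2 c3; linarith
      · rfl
      · exfalso; simp only [inner_neg_right, inner_add_right, inner_add_left,
          hnorm1, hnorm2, hip, hip'] at c1 c2 c3; linarith
      · exfalso; simp only [inner_neg_right, inner_add_right, inner_add_left,
          hnorm1, hnorm2, hip, hip'] at c1 c2 c3; linarith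
      · exfalso; simp only [inner_neg_right, inner_add_right, inner_add_left,
          hnorm1, hnorm2, hip, hip'] at c1 c2 c3; linarith
      · exfalso; simp only [inner_neg_right, inner_add_right, inner_add_left,
          hnorm1, hnorm2, hip, hip'] at c1 c2 c3; linarith
  -- (true, false, false) : α = -a2
  · refine ⟨-a2, ⟨⟨phi_mem5 a1 a2, ?_⟩, ?_⟩⟩
    · intro w hw
      simp only [Reg, Set.mem_setOf_eq, sg, Bool.cond_true, Bool.cond_false,
        inner_add_right, inner_add_left, inner_neg_right, hnorm1, hnorm2, hip, hip'] at hw ⊢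
      obtain ⟨h1, h2, h3⟩ := hw
      refine ⟨by linarith, by linarith, by linarith⟩
    · rintro β ⟨hβPhi, hβinv⟩
      have c1 := constraint_ge hβinv hb (fun w hw => hw.1)
      have c2 := constraint_le hβinv hb (fun w hw => hw.2.1)
      have c3 := constraint_le hβinv hb (fun w hw => hw.2.2)
      rcases mem_Phi_iff.mp hβPhi with rfl | rfl | rfl | rfl | rfl | rfl
      · exfalso; simp only [inner_neg_right, inner_add_right, inner_add_left,
          hnorm1, hnorm2, hip, hip'] at c1 c2 c3; linarith
      · exfalso; simp only [inner_neg_right, inner_add_right, inner_add_left,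
          hnorm1, hnorm2, hip, hip'] at c1 c2 c3; linarith
      · exfalso; simp only [inner_neg_right, inner_add_right, inner_add_left,
          hnorm1, hnorm2, hip, hip'] at c1 c2 c3; linarith
      · exfalso; simp only [inner_neg_right, inner_add_right, inner_add_left,
          hnorm1, hnorm2, hip, hip'] at c1 c2 c3; linarith
      · rfl
      · exfalso; simp only [inner_neg_right, inner_add_right, inner_add_left,
          hnorm1, hnorm2, hip, hip'] at c1 c2 c3; linarith
  -- (true, false, true) : α = a1
  · refine ⟨a1, ⟨⟨phi_mem1 a1 a2, ?_⟩, ?_⟩⟩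
    · intro w hw
      simp only [Reg, Set.mem_setOf_eq, sg, Bool.cond_true, Bool.cond_false,
        inner_add_right, inner_add_left, inner_neg_right, hnorm1, hnorm2, hip, hip'] at hw ⊢
      obtain ⟨h1, h2, h3⟩ := hw
      refine ⟨by linarith, by linarith, by linarith⟩
    · rintro β ⟨hβPhi, hβinv⟩
      have c1 := constraint_ge hβinv hb (fun w hw => hw.1)
      have c2 := constraint_le hβinv hb (fun w hw => hw.2.1)
      have c3 := constraint_ge hβinv hb (fun w hw => hw.2.2)
      rcases mem_Phi_iff.mp hβPhi with rfl | rfl | rfl | rfl | rfl | rfl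
      · rfl
      · exfalso; simp only [inner_neg_right, inner_add_right, inner_add_left,
          hnorm1, hnorm2, hip, hip'] at c1 c2 c3; linarith
      · exfalso; simp only [inner_neg_right, inner_add_right, inner_add_left,
          hnorm1, hnorm2, hip, hip'] at c1 c2 c3; linarith
      · exfalso; simp only [inner_neg_right, inner_add_right, inner_add_left,
          hnorm1, hnorm2, hip, hip'] at c1 c2 c3; linarith
      · exfalso; simp only [inner_neg_right, inner_add_right, inner_add_left,
          hnorm1, hnorm2, hip, hip'] at c1 c2 c3; linarith
      · exfalso; simp only [inner_neg_right, inner_add_right, inner_add_left,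
          hnorm1, hnorm2, hip, hip'] at c1 c2 c3; linarith
  -- (true, true, false) : empty
  · exfalso
    simp only [Reg, Set.mem_setOf_eq, sg, Bool.cond_true, Bool.cond_false,
      inner_add_left] at hb
    obtain ⟨h1, h2, h3⟩ := hb
    linarith
  -- (true, true, true) : α = a1 + a2
  · refine ⟨a1 + a2, ⟨⟨phi_mem3 a1 a2, ?_⟩, ?_⟩⟩
    · intro w hw
      simp only [Reg, Set.mem_setOf_eq, sg, Bool.cond_true, Bool.cond_false,
        inner_add_right, inner_add_left, inner_neg_right, hnorm1, hnorm2, hip, hip'] at hw ⊢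
      obtain ⟨h1, h2, h3⟩ := hw
      refine ⟨by linarith, by linarith, by linarith⟩
    · rintro β ⟨hβPhi, hβinv⟩
      have c1 := constraint_ge hβinv hb (fun w hw => hw.1)
      have c2 := constraint_ge hβinv hb (fun w hw => hw.2.1)
      have c3 := constraint_ge hβinv hb (fun w hw => hw.2.2)
      rcases mem_Phi_iff.mp hβPhi with rfl | rfl | rfl | rfl | rfl | rfl
      · exfalso; simp only [inner_neg_right, inner_add_right, inner_add_left,
          hnorm1, hnorm2, hip, hip'] at c1 c2 c3; linarith
      · exfalso; simp only [inner_neg_right, inner_add_right, inner_add_left,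
          hnorm1, hnorm2, hip, hip'] at c1 c2 c3; linarith
      · rfl
      · exfalso; simp only [inner_neg_right, inner_add_right, inner_add_left,
          hnorm1, hnorm2, hip, hip'] at c1 c2 c3; linarith
      · exfalso; simp only [inner_neg_right, inner_add_right, inner_add_left,
          hnorm1, hnorm2, hip, hip'] at c1 c2 c3; linarith
      · exfalso; simp only [inner_neg_right, inner_add_right, inner_add_left,
          hnorm1, hnorm2, hip, hip'] at c1 c2 c3; linarith
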